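/- Let u : ℝ × ℝ → ℝ^{M+1}, (t,x) ↦ u(t,x), have differentiable component functions, and suppose u is a classical solution of the hyperbolic system ∂_t u_k(t,x) + ∂_x ( f_k(u(t,x)) ) = 0 for every k ∈ {0,…,M} and every (t,x). Then the quadratic entropy U(u) = (1/2)·Σ_{k=0}^{M} u_k² satisfies the additional conservation law ∂_t ( U(u(t,x)) ) + ∂_x ( F(u(t,x)) ) = 0 at every (t,x), where F(u) = Σ_{k=0}^{M} u_k·f_k(u) − ψ(u) is the entropy flux. -/

import Mathlib

/-- A classical solution of the hyperbolic system `∂_t u_k + ∂_x f_k(u) = 0`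
satisfies the additional conservation law `∂_t U(u) + ∂_x F(u) = 0` for the
quadratic entropy `U(u) = (1/2) Σ_k u_k²` and the entropy flux
`F(u) = Σ_k u_k f_k(u) - ψ(u)`. -/
theorem stmt_3 (M : ℕ) (c : Fin (M+1) → Fin (M+1) → Fin (M+1) → ℝ)
    (hsymm₁ : ∀ i j k, c i j k = c j i k)
    (hsymm₂ : ∀ i j k, c i j k = c i k j)
    (f : (Fin (M+1) → ℝ) → Fin (M+1) → ℝ)
    (hf : ∀ u k, f u k = (1/2) * ∑ i, ∑ j, c i j k * u i * u j)
    (ψ : (Fin (M+1) → ℝ) → ℝ)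
    (hψ : ∀ u, ψ u = (1/6) * ∑ i, ∑ j, ∑ k, c i j k * u i * u j * u k)
    (U : (Fin (M+1) → ℝ) → ℝ)
    (hU : ∀ u, U u = (1/2) * ∑ k, (u k)^2)
    (F : (Fin (M+1) → ℝ) → ℝ)
    (hF : ∀ u, F u = (∑ k, u k * f u k) - ψ u)
    (u : ℝ → ℝ → Fin (M+1) → ℝ)
    (hdiff : ∀ k, Differentiable ℝ (fun p : ℝ × ℝ => u p.1 p.2 k))
    (hpde : ∀ k t x, deriv (fun s => u s x k) t + deriv (fun y => f (u t y) k) x = 0) :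
    ∀ t x, deriv (fun s => U (u s x)) t + deriv (fun y => F (u t y)) x = 0 := by
  intro t x
  have hdt : ∀ k, DifferentiableAt ℝ (fun s => u s x k) t := fun k =>
    ((hdiff k) (t, x)).comp (f := fun s => (s, x)) t (differentiableAt_id.prodMk (differentiableAt_const x))
  have hdx : ∀ k, DifferentiableAt ℝ (fun y => u t y k) x := fun k =>
    ((hdiff k) (t, x)).comp (f := fun y => (t, y)) x ((differentiableAt_const t).prodMk differentiableAt_id)
  obtain ⟨a, ha⟩ : ∃ a : Fin (M+1) → ℝ, ∀ k, HasDerivAt (fun s => u s x k) (a k) t :=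
    ⟨_, fun k => (hdt k).hasDerivAt⟩
  obtain ⟨b, hb⟩ : ∃ b : Fin (M+1) → ℝ, ∀ k, HasDerivAt (fun y => u t y k) (b k) x :=
    ⟨_, fun k => (hdx k).hasDerivAt⟩
  -- derivative of f ∘ u in x
  have hDf0 : ∀ k, HasDerivAt (fun y => f (u t y) k)
      ((1/2) * ∑ i, ∑ j, (c i j k * b i * u t x j + c i j k * u t x i * b j)) x := by
    intro k
    have hfun : (fun y => f (u t y) k)
        = fun y => (1/2) * ∑ i, ∑ j, c i j k * u t y i * u t y j :=
      funext fun y => hf (u t y) k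
    rw [hfun]
    apply HasDerivAt.const_mul
    apply HasDerivAt.fun_sum
    intro i _
    apply HasDerivAt.fun_sum
    intro j _
    have h2 := ((hb i).const_mul (c i j k)).mul (hb j)
    exact h2
  obtain ⟨D, hDf, hDform⟩ : ∃ D : Fin (M+1) → ℝ,
      (∀ k, HasDerivAt (fun y => f (u t y) k) (D k) x) ∧
      (∀ k, D k = (1/2) * ∑ i, ∑ j, (c i j k * b i * u t x j + c i j k * u t x i * b j)) :=
    ⟨_, hDf0, fun _ => rfl⟩
  -- the PDE at (t, x)
  have hak : ∀ k, a k = -(D k) := by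
    intro k
    have h := hpde k t x
    rw [(ha k).deriv, (hDf k).deriv] at h
    linarith
  -- derivative of ψ ∘ u in x
  have hDψ0 : HasDerivAt (fun y => ψ (u t y))
      ((1/6) * ∑ i, ∑ j, ∑ k, ((c i j k * b i * u t x j + c i j k * u t x i * b j) * u t x k
        + c i j k * u t x i * u t x j * b k)) x := by
    have hfun : (fun y => ψ (u t y))
        = fun y => (1/6) * ∑ i, ∑ j, ∑ k, c i j k * u t y i * u t y j * u t y k :=
      funext fun y => hψ (u t y)
    rw [hfun]
    apply HasDerivAt.const_mul
    apply HasDerivAt.fun_sum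
    intro i _
    apply HasDerivAt.fun_sum
    intro j _
    apply HasDerivAt.fun_sum
    intro k _
    have h1 : HasDerivAt (fun y => c i j k * u t y i * u t y j)
        (c i j k * b i * u t x j + c i j k * u t x i * b j) x := by
      have h2 := ((hb i).const_mul (c i j k)).mul (hb j)
      exact h2
    exact h1.mul (hb k)
  obtain ⟨P, hDψ, hPform⟩ : ∃ P : ℝ,
      HasDerivAt (fun y => ψ (u t y)) P x ∧
      P = (1/6) * ∑ i, ∑ j, ∑ k, ((c i j k * b i * u t x j + c i j k * u t x i * b j) * u t x k
        + c i j k * u t x i * u t x j * b k) :=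
    ⟨_, hDψ0, rfl⟩
  -- derivative of U ∘ u in t
  have hDU : HasDerivAt (fun s => U (u s x)) (∑ k, u t x k * a k) t := by
    have hfun : (fun s => U (u s x)) = fun s => (1/2) * ∑ k, (u s x k)^2 :=
      funext fun s => hU (u s x)
    rw [hfun]
    have h : HasDerivAt (fun s => ∑ k, (u s x k)^2) (∑ k, (2:ℝ) * u t x k ^ 1 * a k) t := by
      apply HasDerivAt.fun_sum
      intro k _
      have h1 := (ha k).pow 2
      exact h1.congr_deriv (by norm_num)
    have h2 := h.const_mul ((1:ℝ)/2)
    refine h2.congr_deriv ?_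
    rw [Finset.mul_sum]
    exact Finset.sum_congr rfl fun k _ => by ring
  -- derivative of F ∘ u in x
  have hDF : HasDerivAt (fun y => F (u t y))
      ((∑ k, (b k * f (u t x) k + u t x k * D k)) - P) x := by
    have hfun : (fun y => F (u t y)) = fun y => (∑ k, u t y k * f (u t y) k) - ψ (u t y) :=
      funext fun y => hF (u t y)
    rw [hfun]
    exact HasDerivAt.sub (HasDerivAt.fun_sum fun k _ => (hb k).mul (hDf k)) hDψ
  -- reindexing lemmas for triple sums
  have hrev : ∀ g : Fin (M+1) → Fin (M+1) → Fin (M+1) → ℝ,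
      (∑ i, ∑ j, ∑ k, g i j k) = ∑ k, ∑ j, ∑ i, g i j k := by
    intro g
    calc (∑ i, ∑ j, ∑ k, g i j k) = ∑ j, ∑ i, ∑ k, g i j k := Finset.sum_comm
      _ = ∑ j, ∑ k, ∑ i, g i j k := Finset.sum_congr rfl fun j _ => Finset.sum_comm
      _ = ∑ k, ∑ j, ∑ i, g i j k := Finset.sum_comm
  have cfull : ∀ i j k, c k j i = c i j k := fun i j k => by
    rw [hsymm₂ k j i, hsymm₁ k i j, hsymm₂ i k j]
  have S3 : (∑ i, ∑ j, ∑ k, c i j k * b i * u t x j * u t x k)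
      = ∑ i, ∑ j, ∑ k, c i j k * u t x i * u t x j * b k := by
    rw [hrev fun i j k => c i j k * b i * u t x j * u t x k]
    refine Finset.sum_congr rfl fun i _ => Finset.sum_congr rfl fun j _ =>
      Finset.sum_congr rfl fun k _ => ?_
    rw [cfull k j i]
    ring
  have S2 : (∑ i, ∑ j, ∑ k, c i j k * u t x i * b j * u t x k)
      = ∑ i, ∑ j, ∑ k, c i j k * u t x i * u t x j * b k := by
    refine Finset.sum_congr rfl fun i _ => ?_
    rw [show (∑ j, ∑ k, c i j k * u t x i * b j * u t x k)
        = ∑ k, ∑ j, c i j k * u t x i * b j * u t x k from Finset.sum_comm]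
    refine Finset.sum_congr rfl fun j _ => Finset.sum_congr rfl fun k _ => ?_
    rw [hsymm₂ i k j]
    ring
  -- the entropy flux identity:  ∑ b k * f k  =  P
  have hsumf : (∑ k, b k * f (u t x) k) = P := by
    have hL : (∑ k, b k * f (u t x) k)
        = (1/2) * ∑ k, ∑ i, ∑ j, c i j k * u t x i * u t x j * b k := by
      rw [Finset.mul_sum]
      refine Finset.sum_congr rfl fun k _ => ?_
      rw [hf, show b k * ((1/2) * ∑ i, ∑ j, c i j k * u t x i * u t x j)
            = (1/2) * ((∑ i, ∑ j, c i j k * u t x i * u t x j) * b k) from by ring,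
          Finset.sum_mul]
      congr 1
      exact Finset.sum_congr rfl fun i _ => Finset.sum_mul _ _ _
    have reorder : (∑ k, ∑ i, ∑ j, c i j k * u t x i * u t x j * b k)
        = ∑ i, ∑ j, ∑ k, c i j k * u t x i * u t x j * b k := by
      rw [show (∑ k, ∑ i, ∑ j, c i j k * u t x i * u t x j * b k)
          = ∑ i, ∑ k, ∑ j, c i j k * u t x i * u t x j * b k from Finset.sum_comm]
      exact Finset.sum_congr rfl fun i _ => Finset.sum_comm
    have expand : (∑ i, ∑ j, ∑ k, ((c i j k * b i * u t x j + c i j k * u t x i * b j) * u t x k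
          + c i j k * u t x i * u t x j * b k))
        = (∑ i, ∑ j, ∑ k, c i j k * b i * u t x j * u t x k)
          + (∑ i, ∑ j, ∑ k, c i j k * u t x i * b j * u t x k)
          + (∑ i, ∑ j, ∑ k, c i j k * u t x i * u t x j * b k) := by
      simp only [← Finset.sum_add_distrib]
      refine Finset.sum_congr rfl fun i _ => Finset.sum_congr rfl fun j _ =>
        Finset.sum_congr rfl fun k _ => ?_
      ring
    rw [hL, reorder, hPform, expand, S3, S2]
    ring
  -- put everything together
  rw [hDU.deriv, hDF.deriv]
  have hcomb : (∑ k, (b k * f (u t x) k + u t x k * D k))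
      = (∑ k, b k * f (u t x) k) + ∑ k, u t x k * D k := Finset.sum_add_distrib
  have hneg : (∑ k, u t x k * a k) = -∑ k, u t x k * D k := by
    rw [← Finset.sum_neg_distrib]
    exact Finset.sum_congr rfl fun k _ => by rw [hak k]; ring
  rw [hcomb, hneg, hsumf]
  ring
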